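/- Let d < 0, let K ⊆ ℝⁿ_+ have the load over-satisfaction property, and suppose there exists p₀ ∈ K with ‖σ^{-1}(p₀ − m)‖ ≤ −d. Then for every p_D ∈ ℝⁿ_+, inf{ c^⊤ z : z ∈ ℝⁿ_+, p_D − z ∈ K } ≤ (‖σ^{-1}(p_D − m)‖ − d) · M_σ. -/

import Mathlib

open scoped BigOperators

/-- The weighted norm `‖σ⁻¹ v‖` (Euclidean norm of `σ⁻¹` applied to `v`). -/
noncomputable def invWeightedNorm {n : ℕ} (σ : Matrix (Fin n) (Fin n) ℝ)
    (v : EuclideanSpace ℝ (Fin n)) : ℝ :=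
  ‖(EuclideanSpace.equiv (Fin n) ℝ).symm (σ⁻¹.mulVec (EuclideanSpace.equiv (Fin n) ℝ v))‖

/-- `M_σ := max_{‖ξ‖ = 1} c^⊤ (σξ)^+`, the maximum over the Euclidean unit sphere. -/
noncomputable def Msigma {n : ℕ} (c : EuclideanSpace ℝ (Fin n))
    (σ : Matrix (Fin n) (Fin n) ℝ) : ℝ :=
  sSup {t : ℝ | ∃ ξ : EuclideanSpace ℝ (Fin n), ‖ξ‖ = 1 ∧
    t = ∑ i, c i * max (σ.mulVec (EuclideanSpace.equiv (Fin n) ℝ ξ) i) 0}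

lemma coord_abs_le_one {n : ℕ} (ξ : EuclideanSpace ℝ (Fin n)) (h : ‖ξ‖ = 1) (k : Fin n) :
    |ξ k| ≤ 1 := by
  have hne : Real.sqrt (∑ i, ‖ξ i‖ ^ 2) = 1 := by
    rw [← EuclideanSpace.norm_eq, h]
  have hsum : (∑ i, ‖ξ i‖ ^ 2) = 1 := Real.sqrt_eq_one.1 hne
  have h2 : ∑ i, (ξ i) ^ 2 = 1 := by
    simpa [Real.norm_eq_abs, sq_abs] using hsum
  have h1 : (ξ k) ^ 2 ≤ ∑ i, (ξ i) ^ 2 :=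
    Finset.single_le_sum (fun i _ => sq_nonneg (ξ i)) (Finset.mem_univ k)
  rw [h2] at h1
  exact (sq_le_one_iff_abs_le_one (ξ k)).1 h1

/-- if `d < 0`, `K ⊆ ℝⁿ_+` has the load over-satisfaction property and some
`p₀ ∈ K` lies within weighted distance `−d` of `m`, then for every `p_D ∈ ℝⁿ_+` the
minimal load-shedding cost is at most `(‖σ^{-1}(p_D − m)‖ − d) · M_σ`. -/
theorem loadShed_le_of_neg_dist {n : ℕ} (hn : 1 ≤ n)
    (c : EuclideanSpace ℝ (Fin n)) (hc : ∀ j, 0 < c j)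
    (σ : Matrix (Fin n) (Fin n) ℝ) (hσ : IsUnit σ.det)
    (m : EuclideanSpace ℝ (Fin n)) (d : ℝ) (hd : d < 0)
    (K : Set (EuclideanSpace ℝ (Fin n)))
    (hKpos : ∀ p ∈ K, ∀ j, 0 ≤ p j)
    (hKover : ∀ p ∈ K, ∀ p' : EuclideanSpace ℝ (Fin n),
      (∀ j, 0 ≤ p' j) → (∀ j, p' j ≤ p j) → p' ∈ K)
    (hp₀ : ∃ p₀ ∈ K, invWeightedNorm σ (p₀ - m) ≤ -d) :
    ∀ pD : EuclideanSpace ℝ (Fin n), (∀ j, 0 ≤ pD j) →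
      sInf {t : ℝ | ∃ z : EuclideanSpace ℝ (Fin n),
          (∀ j, 0 ≤ z j) ∧ pD - z ∈ K ∧ t = ∑ j, c j * z j} ≤
        (invWeightedNorm σ (pD - m) - d) * Msigma c σ := by
  classical
  obtain ⟨p₀, hp₀K, hp₀d⟩ := hp₀
  intro pD hpD
  set E := EuclideanSpace.equiv (Fin n) ℝ with hE
  -- the set defining Msigma is bounded above
  set MS : Set ℝ := {t : ℝ | ∃ ξ : EuclideanSpace ℝ (Fin n), ‖ξ‖ = 1 ∧
    t = ∑ i, c i * max (σ.mulVec (E ξ) i) 0} with hMS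
  have hMsigma : Msigma c σ = sSup MS := rfl
  have hbdd : BddAbove MS := by
    refine ⟨∑ j, c j * ∑ k, |σ j k|, ?_⟩
    rintro t ⟨ξ, hξ, rfl⟩
    apply Finset.sum_le_sum
    intro j _
    refine mul_le_mul_of_nonneg_left ?_ (hc j).le
    have h1 : max (σ.mulVec (E ξ) j) 0 ≤ |σ.mulVec (E ξ) j| :=
      max_le (le_abs_self _) (abs_nonneg _)
    refine h1.trans ?_
    have h2 : |σ.mulVec (E ξ) j| ≤ ∑ k, |σ j k * ξ k| := by
      simpa [hE, Matrix.mulVec, dotProduct] using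
        Finset.abs_sum_le_sum_abs (fun k => σ j k * ξ k) Finset.univ
    refine h2.trans (Finset.sum_le_sum fun k _ => ?_)
    rw [abs_mul]
    calc |σ j k| * |ξ k| ≤ |σ j k| * 1 :=
          mul_le_mul_of_nonneg_left (coord_abs_le_one ξ hξ k) (abs_nonneg _)
      _ = |σ j k| := mul_one _
  -- Msigma is nonnegative
  have hM0 : 0 ≤ Msigma c σ := by
    set ξ0 : EuclideanSpace ℝ (Fin n) := EuclideanSpace.single ⟨0, hn⟩ (1 : ℝ) with hξ0def
    have hξ0 : ‖ξ0‖ = 1 := by simp [hξ0def, EuclideanSpace.norm_single]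
    have hmem : (∑ i, c i * max (σ.mulVec (E ξ0) i) 0) ∈ MS := ⟨ξ0, hξ0, rfl⟩
    have hle := le_csSup hbdd hmem
    refine le_trans ?_ hle
    exact Finset.sum_nonneg fun i _ => mul_nonneg (hc i).le (le_max_right _ _)
  -- candidate shed vector
  set z : EuclideanSpace ℝ (Fin n) := WithLp.toLp 2 (fun j => max (pD j - p₀ j) 0) with hzdef
  have hz0 : ∀ j, 0 ≤ z j := fun j => le_max_right _ _
  have hzK : pD - z ∈ K := by
    refine hKover p₀ hp₀K _ ?_ ?_
    · intro j
      show 0 ≤ pD j - max (pD j - p₀ j) 0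
      rcases le_total (p₀ j) (pD j) with h | h
      · rw [max_eq_left (sub_nonneg.2 h)]
        have := hKpos p₀ hp₀K j; linarith
      · rw [max_eq_right (sub_nonpos.2 h)]
        have := hpD j; linarith
    · intro j
      show pD j - max (pD j - p₀ j) 0 ≤ p₀ j
      rcases le_total (p₀ j) (pD j) with h | h
      · rw [max_eq_left (sub_nonneg.2 h)]; linarith
      · rw [max_eq_right (sub_nonpos.2 h)]; linarith
  set S : Set ℝ := {t : ℝ | ∃ z : EuclideanSpace ℝ (Fin n),
      (∀ j, 0 ≤ z j) ∧ pD - z ∈ K ∧ t = ∑ j, c j * z j} with hS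
  have hSb : BddBelow S := by
    refine ⟨0, ?_⟩
    rintro t ⟨z', hz', _, rfl⟩
    exact Finset.sum_nonneg fun j _ => mul_nonneg (hc j).le (hz' j)
  have hSm : (∑ j, c j * z j) ∈ S := ⟨z, hz0, hzK, rfl⟩
  have hInf : sInf S ≤ ∑ j, c j * z j := csInf_le hSb hSm
  refine hInf.trans ?_
  -- write pD - p₀ = σ u
  set uE : EuclideanSpace ℝ (Fin n) := E.symm (σ⁻¹.mulVec (E (pD - p₀))) with huE
  set r : ℝ := ‖uE‖ with hr
  have hrw : invWeightedNorm σ (pD - p₀) = r := rfl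
  have hmv : σ.mulVec (E uE) = E (pD - p₀) := by
    rw [huE]
    rw [ContinuousLinearEquiv.apply_symm_apply]
    rw [Matrix.mulVec_mulVec, Matrix.mul_nonsing_inv σ hσ, Matrix.one_mulVec]
  have hmvj : ∀ j, σ.mulVec (E uE) j = pD j - p₀ j := by
    intro j; rw [hmv]; rfl
  -- triangle inequality bound on r
  have hrle : r ≤ invWeightedNorm σ (pD - m) - d := by
    have hsplit : pD - p₀ = (pD - m) - (p₀ - m) := by abel
    have hlin : uE = E.symm (σ⁻¹.mulVec (E (pD - m))) - E.symm (σ⁻¹.mulVec (E (p₀ - m))) := by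
      rw [huE, hsplit, map_sub, Matrix.mulVec_sub, map_sub]
    have htri : r ≤ invWeightedNorm σ (pD - m) + invWeightedNorm σ (p₀ - m) := by
      rw [hr, hlin]
      exact norm_sub_le _ _
    linarith
  -- main cost bound
  have hcost : (∑ j, c j * z j) ≤ r * Msigma c σ := by
    rcases eq_or_lt_of_le (norm_nonneg uE) with h0 | h0
    · -- r = 0 : z = 0
      have huE0 : uE = 0 := norm_eq_zero.1 h0.symm
      have hz' : ∀ j, z j = 0 := by
        intro j
        have h1 : pD j - p₀ j = 0 := by
          have h2 := hmvj j
          rw [huE0] at h2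
          simpa [Matrix.mulVec_zero] using h2.symm
        simp [hzdef, h1]
      have hsum0 : (∑ j, c j * z j) = 0 := by
        apply Finset.sum_eq_zero; intro j _; rw [hz' j, mul_zero]
      rw [hsum0]
      exact mul_nonneg (norm_nonneg uE) hM0
    · have hrpos : 0 < r := h0
      set ξ : EuclideanSpace ℝ (Fin n) := r⁻¹ • uE with hξdef
      have hξ1 : ‖ξ‖ = 1 := by
        rw [hξdef, norm_smul, Real.norm_eq_abs, abs_inv, abs_of_pos hrpos, ← hr,
          inv_mul_cancel₀ (ne_of_gt hrpos)]
      have hξj : ∀ j, σ.mulVec (E ξ) j = r⁻¹ * (pD j - p₀ j) := by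
        intro j
        have : E ξ = r⁻¹ • (E uE) := by rw [hξdef, map_smul]
        rw [this, Matrix.mulVec_smul]
        simp [hmvj j]
      have hmemξ : (∑ i, c i * max (σ.mulVec (E ξ) i) 0) ∈ MS := ⟨ξ, hξ1, rfl⟩
      have hleM : (∑ i, c i * max (σ.mulVec (E ξ) i) 0) ≤ Msigma c σ :=
        le_csSup hbdd hmemξ
      have hsum : (∑ i, c i * max (σ.mulVec (E ξ) i) 0) = r⁻¹ * ∑ j, c j * z j := by
        rw [Finset.mul_sum]
        apply Finset.sum_congr rfl
        intro i _
        rw [hξj i]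
        have : max (r⁻¹ * (pD i - p₀ i)) 0 = r⁻¹ * max (pD i - p₀ i) 0 := by
          rw [mul_max_of_nonneg _ _ (inv_nonneg.2 hrpos.le), mul_zero]
        rw [this]
        show c i * (r⁻¹ * max (pD i - p₀ i) 0) = r⁻¹ * (c i * max (pD i - p₀ i) 0)
        ring
      have : r⁻¹ * (∑ j, c j * z j) ≤ Msigma c σ := by rw [← hsum]; exact hleM
      calc (∑ j, c j * z j) = r * (r⁻¹ * ∑ j, c j * z j) := by
            field_simp
        _ ≤ r * Msigma c σ := mul_le_mul_of_nonneg_left this hrpos.le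
  refine hcost.trans ?_
  exact mul_le_mul_of_nonneg_right hrle hM0
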